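/- Let x be an algebraic integer of degree 4 such that all complex absolute values of x equal sqrt(2) (a Weil 2-number of degree 4), and suppose x is non-real. Then beta = x + 2/x is a totally real quadratic algebraic integer, beta^2 - 8 is totally negative, and the minimal polynomial of x has the form X^4 - a1*X^3 + (4 + a2)*X^2 - 2*a1*X + 4 where a1 = Tr(beta) and a2 = N(beta) are integers. -/

import Mathlib

open Polynomial

/-- Let `x` be a non-real Weil 2-number of degree 4 (an algebraic
integer of degree 4 all of whose complex absolute values equal `√2`, given here by
a monic irreducible integer polynomial `p` of degree 4 with root `x`, all of whose
complex roots have absolute value `√2`). Then `β = x + 2/x` is a totally real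
quadratic algebraic integer, `β² - 8` is totally negative, and
`p = X⁴ - a₁X³ + (4+a₂)X² - 2a₁X + 4` where `a₁ = Tr β` and `a₂ = N β` are
integers (so `β² = a₁β - a₂`). -/
theorem weil_two_number_degree_four
    (p : Polynomial ℤ) (hmonic : p.Monic) (hdeg : p.natDegree = 4)
    (hirr : Irreducible (p.map (algebraMap ℤ ℚ)))
    (x : ℂ) (hx : Polynomial.aeval x p = 0)
    (hweil : ∀ z : ℂ, Polynomial.aeval z p = 0 → ‖z‖ = Real.sqrt 2)
    (hnonreal : x.im ≠ 0) :
    ∃ a1 a2 : ℤ,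
      p = X ^ 4 - C a1 * X ^ 3 + C (4 + a2) * X ^ 2 - C (2 * a1) * X + C 4 ∧
      (x + 2 / x).im = 0 ∧
      (x + 2 / x) ^ 2 - (a1 : ℂ) * (x + 2 / x) + (a2 : ℂ) = 0 ∧
      (∀ q : ℚ, x + 2 / x ≠ (q : ℂ)) ∧
      -- β is totally real and β² - 8 is totally negative: every conjugate of β
      -- (i.e. every root of X² - a₁X + a₂) is real, with square less than 8
      (∀ z : ℂ, z ^ 2 - (a1 : ℂ) * z + (a2 : ℂ) = 0 → z.im = 0 ∧ z.re ^ 2 < 8) := by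
  have hx0 : x ≠ 0 := fun h => hnonreal (by simp [h])
  set P : ℚ[X] := p.map (algebraMap ℤ ℚ) with hPdef
  have hPmonic : P.Monic := hmonic.map _
  have hPdeg : P.natDegree = 4 := by rw [hPdef, hmonic.natDegree_map, hdeg]
  have haev : ∀ z : ℂ, aeval z P = aeval z p := fun z => aeval_map_algebraMap ℚ z p
  -- P is the minimal polynomial of each of its roots
  have hminx : ∀ z : ℂ, aeval z p = 0 → P = minpoly ℚ z := fun z hz =>
    minpoly.eq_of_irreducible_of_monic hirr (by rw [haev]; exact hz) hPmonic
  have hnoquad : ∀ z : ℂ, aeval z p = 0 → ∀ q : ℚ[X], q.natDegree ≤ 3 → aeval z q = 0 → q = 0 := by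
    intro z hz q hqd hqz
    by_contra hq0
    have h1 := minpoly.degree_le_of_ne_zero ℚ z hq0 hqz
    rw [← hminx z hz] at h1
    have h2 : q.degree ≤ (3 : ℕ) := natDegree_le_iff_degree_le.mp hqd
    have h3 : P.degree = (4 : ℕ) := by rw [degree_eq_natDegree hPmonic.ne_zero, hPdeg]
    rw [h3] at h1
    have h4 : ((4:ℕ) : WithBot ℕ) ≤ ((3:ℕ) : WithBot ℕ) := le_trans h1 h2
    exact absurd (WithBot.coe_le_coe.mp h4) (by norm_num)
  -- no real roots
  have hnoreal : ∀ r : ℝ, aeval ((r : ℝ) : ℂ) p ≠ 0 := by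
    intro r hr
    have habs := hweil _ hr
    rw [Complex.norm_real, Real.norm_eq_abs] at habs
    have hr2 : r ^ 2 = 2 := by
      have h := congrArg (· ^ 2) habs
      simp only [sq_abs] at h
      rw [Real.sq_sqrt (by norm_num : (0:ℝ) ≤ 2)] at h
      exact h
    have hrc : ((r:ℝ):ℂ) ^ 2 = 2 := by exact_mod_cast congrArg (Complex.ofReal) hr2
    have hz : aeval ((r:ℝ):ℂ) ((X : ℚ[X]) ^ 2 - C 2) = 0 := by
      simp [hrc]
    have := hnoquad _ hr _ (by compute_degree!) hz
    exact X_pow_sub_C_ne_zero (by norm_num) (2:ℚ) this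
  -- conjugate is a root
  have hconj : aeval ((starRingEnd ℂ) x) p = 0 := by
    have h : (starRingEnd ℂ) (aeval x p) = 0 := by rw [hx, map_zero]
    rwa [aeval_def, hom_eval₂,
      Subsingleton.elim ((starRingEnd ℂ).comp (algebraMap ℤ ℂ)) (algebraMap ℤ ℂ),
      ← aeval_def] at h
  have hns : Complex.normSq x = 2 := by
    rw [← Complex.sq_norm, hweil x hx, Real.sq_sqrt (by norm_num : (0:ℝ) ≤ 2)]
  have hmul : x * (starRingEnd ℂ) x = 2 := by
    rw [Complex.mul_conj, hns]; norm_num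
  have hc4 : p.coeff 4 = 1 := by rw [← hdeg]; exact hmonic.coeff_natDegree
  -- expansion of aeval
  have hexp : ∀ z : ℂ, aeval z p =
      (p.coeff 0 : ℂ) + (p.coeff 1 : ℂ) * z + (p.coeff 2 : ℂ) * z ^ 2
        + (p.coeff 3 : ℂ) * z ^ 3 + z ^ 4 := by
    intro z
    rw [aeval_eq_sum_range, hdeg]
    simp [Finset.sum_range_succ, hc4, zsmul_eq_mul]
  have hx4 : (p.coeff 0 : ℂ) + (p.coeff 1 : ℂ) * x + (p.coeff 2 : ℂ) * x ^ 2
      + (p.coeff 3 : ℂ) * x ^ 3 + x ^ 4 = 0 := by rw [← hexp]; exact hx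
  have hy4 : (p.coeff 0 : ℂ) + (p.coeff 1 : ℂ) * (starRingEnd ℂ) x
      + (p.coeff 2 : ℂ) * ((starRingEnd ℂ) x) ^ 2
      + (p.coeff 3 : ℂ) * ((starRingEnd ℂ) x) ^ 3 + ((starRingEnd ℂ) x) ^ 4 = 0 := by
    rw [← hexp]; exact hconj
  set y : ℂ := (starRingEnd ℂ) x with hy
  have hkey : (16 : ℂ) + 8 * (p.coeff 3 : ℂ) * x + 4 * (p.coeff 2 : ℂ) * x ^ 2
      + 2 * (p.coeff 1 : ℂ) * x ^ 3 + (p.coeff 0 : ℂ) * x ^ 4 = 0 := by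
    linear_combination x ^ 4 * hy4 -
      ((x*y+2)*(x^2*y^2+4) + (p.coeff 3 : ℂ)*x*(x^2*y^2+2*x*y+4)
        + (p.coeff 2 : ℂ)*x^2*(x*y+2) + (p.coeff 1 : ℂ)*x^3) * hmul
  -- the reversed polynomial
  set Q : ℚ[X] := C ((p.coeff 0 : ℚ)) * X ^ 4 + C (2 * (p.coeff 1 : ℚ)) * X ^ 3
      + C (4 * (p.coeff 2 : ℚ)) * X ^ 2 + C (8 * (p.coeff 3 : ℚ)) * X + C 16 with hQdef
  have haQ : aeval x Q = 0 := by
    rw [hQdef]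
    simp only [map_add, map_mul, map_pow, aeval_C, aeval_X, eq_ratCast]
    push_cast
    linear_combination hkey
  have hQ0 : Q.coeff 0 = 16 := by
    rw [hQdef]; simp only [coeff_add, coeff_C_mul, coeff_X_pow, coeff_X, coeff_C]; norm_num
  have hQ1 : Q.coeff 1 = 8 * (p.coeff 3 : ℚ) := by
    rw [hQdef]; simp only [coeff_add, coeff_C_mul, coeff_X_pow, coeff_X, coeff_C]; norm_num
  have hQ2 : Q.coeff 2 = 4 * (p.coeff 2 : ℚ) := by
    rw [hQdef]; simp only [coeff_add, coeff_C_mul, coeff_X_pow, coeff_X, coeff_C]; norm_num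
  have hQ3 : Q.coeff 3 = 2 * (p.coeff 1 : ℚ) := by
    rw [hQdef]; simp only [coeff_add, coeff_C_mul, coeff_X_pow, coeff_X, coeff_C]; norm_num
  have hQ4 : Q.coeff 4 = (p.coeff 0 : ℚ) := by
    rw [hQdef]; simp only [coeff_add, coeff_C_mul, coeff_X_pow, coeff_X, coeff_C]; norm_num
  have hQne : Q ≠ 0 := fun h => by rw [h] at hQ0; simp at hQ0
  obtain ⟨R, hR⟩ : P ∣ Q := by
    rw [hminx x hx]; exact minpoly.dvd ℚ x haQ
  have hRne : R ≠ 0 := fun h => hQne (by rw [hR, h, mul_zero])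
  have hQdeg : Q.natDegree ≤ 4 := by rw [hQdef]; compute_degree
  have hRdeg : R.natDegree = 0 := by
    have h := natDegree_mul hPmonic.ne_zero hRne
    rw [← hR, hPdeg] at h
    omega
  have hRu : R = C (R.coeff 0) := eq_C_of_natDegree_eq_zero hRdeg
  set u : ℚ := R.coeff 0 with hu
  have hcoeff : ∀ k, Q.coeff k = (p.coeff k : ℚ) * u := by
    intro k
    rw [hR, hRu, coeff_mul_C, hPdef, coeff_map]
    rfl
  have hP4 : (p.coeff 4 : ℚ) = 1 := by rw [hc4]; norm_num
  have hue : u = (p.coeff 0 : ℚ) := by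
    have := hcoeff 4
    rw [hQ4, hc4] at this
    simpa using this.symm
  have hc0sq : (p.coeff 0 : ℚ) * (p.coeff 0 : ℚ) = 16 := by
    have := hcoeff 0
    rw [hQ0, hue] at this
    linarith
  have hc0sqz : p.coeff 0 * p.coeff 0 = 16 := by exact_mod_cast hc0sq
  -- positivity of constant coefficient via IVT
  have hc0pos : 0 < p.coeff 0 := by
    by_contra h
    push_neg at h
    have hc0neg : p.coeff 0 < 0 := by
      rcases lt_or_eq_of_le h with h' | h'
      · exact h'
      · rw [h'] at hc0sqz; simp at hc0sqz
    set pR : ℝ[X] := p.map (Int.castRingHom ℝ) with hpR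
    have hpRmonic : pR.Monic := hmonic.map _
    have hpRdeg : pR.natDegree = 4 := by rw [hpR, hmonic.natDegree_map, hdeg]
    have heval0 : pR.eval 0 = (p.coeff 0 : ℝ) := by
      rw [hpR, eval_map]
      rw [eval₂_at_zero]
      rfl
    have htend : Filter.Tendsto (fun t => pR.eval t) Filter.atTop Filter.atTop := by
      apply Polynomial.tendsto_atTop_of_leadingCoeff_nonneg
      · rw [degree_eq_natDegree hpRmonic.ne_zero, hpRdeg]; norm_num
      · rw [hpRmonic.leadingCoeff]; norm_num
    obtain ⟨T, hT1, hT0⟩ := ((htend.eventually_ge_atTop 1).and (Filter.eventually_ge_atTop (0:ℝ))).exists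
    have hmem : (0:ℝ) ∈ Set.Icc (pR.eval 0) (pR.eval T) := by
      constructor
      · rw [heval0]; exact_mod_cast hc0neg.le
      · linarith
    obtain ⟨r, _, hr⟩ := intermediate_value_Icc hT0 pR.continuous.continuousOn hmem
    apply hnoreal r
    have hr' : pR.eval r = 0 := hr
    have h2 : Complex.ofRealHom (pR.eval r) = 0 := by rw [hr']; simp
    rwa [hpR, eval_map, hom_eval₂,
      Subsingleton.elim (Complex.ofRealHom.comp (Int.castRingHom ℝ)) (algebraMap ℤ ℂ),
      ← aeval_def] at h2
  have hc0val : p.coeff 0 = 4 := by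
    have hfac : (p.coeff 0 - 4) * (p.coeff 0 + 4) = 0 := by nlinarith [hc0sqz]
    rcases mul_eq_zero.mp hfac with h | h
    · omega
    · omega
  have hc1val : p.coeff 1 = 2 * p.coeff 3 := by
    have h3 := hcoeff 3
    rw [hQ3, hue, hc0val] at h3
    have : (p.coeff 1 : ℚ) = 2 * (p.coeff 3 : ℚ) := by push_cast at h3; linarith
    exact_mod_cast this
  -- the explicit form of p
  have hform : p = X ^ 4 - C (-p.coeff 3) * X ^ 3 + C (4 + (p.coeff 2 - 4)) * X ^ 2
      - C (2 * -p.coeff 3) * X + C 4 := by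
    have hps : p = C (p.coeff 0) + C (p.coeff 1) * X + C (p.coeff 2) * X ^ 2
        + C (p.coeff 3) * X ^ 3 + C (p.coeff 4) * X ^ 4 := by
      conv_lhs => rw [p.as_sum_range' 5 (by omega)]
      simp only [Finset.sum_range_succ, Finset.sum_range_zero, ← C_mul_X_pow_eq_monomial]
      ring
    conv_lhs => rw [hps]
    rw [hc4, hc0val, hc1val]
    simp only [map_neg, map_sub, map_add, map_mul, map_one, map_ofNat]
    ring
  have hconjx : y = 2 / x := by rw [eq_div_iff hx0]; linear_combination hmul
  have h2x : x * (2 / x) = 2 := by field_simp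
  -- the quartic relation with explicit coefficients
  have hx4' : (4:ℂ) + 2*(p.coeff 3:ℂ)*x + (p.coeff 2:ℂ)*x^2 + (p.coeff 3:ℂ)*x^3 + x^4 = 0 := by
    rw [hc0val, hc1val] at hx4
    push_cast at hx4 ⊢
    linear_combination hx4
  refine ⟨-p.coeff 3, p.coeff 2 - 4, hform, ?_, ?_, ?_, ?_⟩
  · -- β is real
    rw [← hconjx, hy]
    simp [Complex.add_im]
  · -- β satisfies the quadratic
    have hm : x^2 * ((x + 2/x)^2 + (p.coeff 3:ℂ)*(x + 2/x) + ((p.coeff 2:ℂ) - 4)) = 0 := by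
      linear_combination hx4' + (2*x^2 + x*(2/x) + 2 + (p.coeff 3:ℂ)*x) * h2x
    have hexpr0 := (mul_eq_zero.mp hm).resolve_left (pow_ne_zero 2 hx0)
    push_cast
    linear_combination hexpr0
  · -- β is irrational
    intro q hq
    have hxq : x^2 - (q:ℂ)*x + 2 = 0 := by linear_combination x * hq - h2x
    have haQq : aeval x ((X:ℚ[X])^2 - C q * X + C 2) = 0 := by
      simp only [map_add, map_sub, map_mul, map_pow, aeval_X, aeval_C, eq_ratCast]
      linear_combination hxq
    have hzero := hnoquad x hx _ (by compute_degree <;> norm_num) haQq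
    have hcq : ((X:ℚ[X])^2 - C q * X + C 2).coeff 2 = 1 := by
      simp only [coeff_add, coeff_sub, coeff_C_mul, coeff_X_pow, coeff_X, coeff_C]
      norm_num
    rw [hzero] at hcq
    simp at hcq
  · -- conjugates of β
    intro z hz
    have hz' : z^2 + (p.coeff 3:ℂ)*z + ((p.coeff 2:ℂ) - 4) = 0 := by
      push_cast at hz
      linear_combination hz
    obtain ⟨s, hs⟩ : ∃ s : ℂ, s^2 = z^2 - 8 :=
      IsAlgClosed.exists_pow_nat_eq (z^2 - 8) (by norm_num)
    set w : ℂ := (z + s)/2 with hwdef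
    have hw' : w^2 - z*w + 2 = 0 := by
      rw [hwdef]
      linear_combination (1/4 : ℂ) * hs
    have hw0 : w ≠ 0 := by
      intro h
      rw [h] at hw'
      norm_num at hw'
    have hpw : aeval w p = 0 := by
      rw [hform]
      simp only [map_add, map_sub, map_mul, map_pow, aeval_X, aeval_C]
      simp only [algebraMap_int_eq, eq_intCast]
      push_cast
      linear_combination (w*z - 2) * hz' + (w^2 + (z + (p.coeff 3:ℂ))*w
        + (z^2 + (p.coeff 3:ℂ)*z + ((p.coeff 2:ℂ) - 4) + 2)) * hw'
    have hnsw : Complex.normSq w = 2 := by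
      rw [← Complex.sq_norm, hweil w hpw, Real.sq_sqrt (by norm_num : (0:ℝ) ≤ 2)]
    have hwim : w.im ≠ 0 := by
      intro h
      apply hnoreal w.re
      have hwre : ((w.re : ℝ) : ℂ) = w := Complex.ext (by simp) (by simp [h])
      rw [hwre]
      exact hpw
    have hcw : w * (starRingEnd ℂ) w = 2 := by rw [Complex.mul_conj, hnsw]; norm_num
    have hzw : z = w + (starRingEnd ℂ) w := by
      have h1 : z * w = (w + (starRingEnd ℂ) w) * w := by linear_combination -hw' - hcw
      exact mul_right_cancel₀ hw0 h1
    have hre2 : w.re * w.re + w.im * w.im = 2 := by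
      have := hnsw
      rwa [Complex.normSq_apply] at this
    constructor
    · rw [hzw]; simp
    · have hre : z.re = 2 * w.re := by rw [hzw]; simp; ring
      rw [hre]
      nlinarith [hre2, mul_self_pos.mpr hwim]
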